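/- Let X be a non-reflexive complex Banach space, let V = X* with dim V ≥ 2, and let f ∈ V* be the evaluation functional at some nonzero x₀ ∈ X with ‖x₀‖ ≤ 1 (so f is nonzero, w*-continuous, and ‖f‖ ≤ 1). Equip V with the product a b := f(a)·b, making V a dual Banach algebra V_f with predual X. Then σwc(V_f) = ker f. -/

import Mathlib

noncomputable section

open Filter Topology

universe u

/-- The locally convex topology on `A` induced by a pairing `p : A → X → ℂ`,
i.e. the initial topology for the family of maps `a ↦ p a x`, `x : X`. -/
def topOfPairing {A X : Type*} (p : A → X → ℂ) : TopologicalSpace A :=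
  TopologicalSpace.induced p Pi.topologicalSpace

theorem continuous_topOfPairing_iff {B A X : Type*} {tB : TopologicalSpace B}
    {p : A → X → ℂ} {f : B → A} :
    Continuous[tB, topOfPairing p] f ↔
      ∀ x, Continuous[tB, inferInstance] fun b => p (f b) x := by
  rw [topOfPairing, continuous_induced_rng, continuous_pi_iff]
  exact Iff.rfl

theorem topOfPairing_eval_cont {A X : Type*} (p : A → X → ℂ) (x : X) :
    Continuous[topOfPairing p, inferInstance] fun a => p a x :=
  continuous_topOfPairing_iff.1 (@continuous_id _ (topOfPairing p)) x

/-- The weak topology `σ(E, E*)` on a normed space `E`. -/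
def weakTop (E : Type u) [NormedAddCommGroup E] [NormedSpace ℂ E] : TopologicalSpace E :=
  topOfPairing fun x (φ : E →L[ℂ] ℂ) => φ x

/-- The weak-* topology `σ(E*, E)` on the dual of a normed space `E`. -/
def wstarD (E : Type u) [NormedAddCommGroup E] [NormedSpace ℂ E] :
    TopologicalSpace (E →L[ℂ] ℂ) :=
  topOfPairing fun Λ (x : E) => Λ x

section Core

variable {A X : Type u} [NormedAddCommGroup A] [NormedSpace ℂ A]
  [NormedAddCommGroup X] [NormedSpace ℂ X]

/-- The weak-* topology `σ(A, X)` on a dual Banach space `A`, where the duality with the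
predual `X` is implemented by an isometric linear isomorphism `ρ : A ≅ X*`. -/
def wstar (ρ : A ≃ₗᵢ[ℂ] (X →L[ℂ] ℂ)) : TopologicalSpace A :=
  topOfPairing fun a (x : X) => ρ a x

theorem weakTop_cont_iff {B : Type*} {tB : TopologicalSpace B} {E : Type u}
    [NormedAddCommGroup E] [NormedSpace ℂ E] {f : B → E} :
    Continuous[tB, weakTop E] f ↔
      ∀ φ : E →L[ℂ] ℂ, Continuous[tB, inferInstance] fun b => φ (f b) :=
  continuous_topOfPairing_iff

namespace WeakCont

variable {B : Type*} {E F : Type u} [NormedAddCommGroup E] [NormedSpace ℂ E]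
  [NormedAddCommGroup F] [NormedSpace ℂ F]

theorem clm_comp (tB : TopologicalSpace B) (L : E →L[ℂ] F) {f : B → E}
    (hf : Continuous[tB, weakTop E] f) : Continuous[tB, weakTop F] fun b => L (f b) :=
  weakTop_cont_iff.2 fun φ => weakTop_cont_iff.1 hf (φ.comp L)

theorem add (tB : TopologicalSpace B) {f g : B → E} (hf : Continuous[tB, weakTop E] f)
    (hg : Continuous[tB, weakTop E] g) : Continuous[tB, weakTop E] fun b => f b + g b := by
  refine weakTop_cont_iff.2 fun φ => ?_
  letI := tB
  have h : Continuous fun b => φ (f b) + φ (g b) :=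
    (weakTop_cont_iff.1 hf φ).add (weakTop_cont_iff.1 hg φ)
  simpa [map_add] using h

theorem const_smul (tB : TopologicalSpace B) {f : B → E} (hf : Continuous[tB, weakTop E] f)
    (c : ℂ) : Continuous[tB, weakTop E] fun b => c • f b := by
  refine weakTop_cont_iff.2 fun φ => ?_
  letI := tB
  have h : Continuous fun b => c * φ (f b) := (weakTop_cont_iff.1 hf φ).const_smul c
  simpa [map_smul, smul_eq_mul] using h

theorem zero (tB : TopologicalSpace B) :
    Continuous[tB, weakTop E] fun _ : B => (0 : E) := by
  refine weakTop_cont_iff.2 fun φ => ?_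
  letI := tB
  simpa using (continuous_const : Continuous fun _ : B => (0 : ℂ))

end WeakCont

/-- A Banach algebra structure on a normed space `A`: an associative continuous bilinear
multiplication satisfying `‖a * b‖ ≤ ‖a‖ * ‖b‖`. -/
structure BanachAlgStr (A : Type u) [NormedAddCommGroup A] [NormedSpace ℂ A] where
  mul : A →L[ℂ] A →L[ℂ] A
  mul_assoc : ∀ a b c, mul (mul a b) c = mul a (mul b c)
  norm_mul_le : ∀ a b, ‖mul a b‖ ≤ ‖a‖ * ‖b‖

/-- `A`, with predual `X` (via `ρ`) and multiplication `S`, is a dual Banach algebra: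
the multiplication is separately continuous for the weak-* topology `σ(A, X)`. -/
structure IsDualBanachAlgebra (ρ : A ≃ₗᵢ[ℂ] (X →L[ℂ] ℂ)) (S : BanachAlgStr A) : Prop where
  mul_left : ∀ a, Continuous[wstar ρ, wstar ρ] fun b => S.mul a b
  mul_right : ∀ a, Continuous[wstar ρ, wstar ρ] fun b => S.mul b a

/-- A Banach `A`-bimodule structure (for the Banach algebra `(A, S)`) on a normed space `E`:
continuous bilinear left and right actions `l`, `r` which commute and are associative
for the multiplication `S.mul`. -/
structure BanachBimodule {A : Type u} [NormedAddCommGroup A] [NormedSpace ℂ A]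
    (S : BanachAlgStr A) (E : Type u) [NormedAddCommGroup E] [NormedSpace ℂ E] where
  l : A →L[ℂ] E →L[ℂ] E
  r : A →L[ℂ] E →L[ℂ] E
  l_mul : ∀ a b x, l (S.mul a b) x = l a (l b x)
  r_mul : ∀ a b x, r (S.mul a b) x = r b (r a x)
  lr_comm : ∀ a b x, l a (r b x) = r b (l a x)

/-- `A` as a Banach bimodule over itself, via multiplication. -/
def BanachAlgStr.toBimodule (S : BanachAlgStr A) : BanachBimodule S A where
  l := S.mul
  r := S.mul.flip
  l_mul := fun a b x => S.mul_assoc a b x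
  r_mul := fun a b x => (S.mul_assoc x a b).symm
  lr_comm := fun a b x => (S.mul_assoc a x b).symm

variable {E : Type u} [NormedAddCommGroup E] [NormedSpace ℂ E]

/-- `σwc(E)`: the set of `x ∈ E` such that the maps `a ↦ a · x` and `a ↦ x · a` are
continuous from the weak-* topology on `A` into the weak topology on `E`.
It is a (closed) linear subspace of `E`. -/
def sigmaWC (ρ : A ≃ₗᵢ[ℂ] (X →L[ℂ] ℂ)) {S : BanachAlgStr A} (M : BanachBimodule S E) :
    Submodule ℂ E where
  carrier := {x | Continuous[wstar ρ, weakTop E] (fun a => M.l a x) ∧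
    Continuous[wstar ρ, weakTop E] fun a => M.r a x}
  add_mem' := by
    rintro x y ⟨h1, h2⟩ ⟨h3, h4⟩
    constructor
    · simp only [map_add]
      exact WeakCont.add _ h1 h3
    · simp only [map_add]
      exact WeakCont.add _ h2 h4
  zero_mem' := by
    constructor
    · simp only [map_zero]
      exact WeakCont.zero _
    · simp only [map_zero]
      exact WeakCont.zero _
  smul_mem' := by
    rintro c x ⟨h1, h2⟩
    constructor
    · simp only [map_smul]
      exact WeakCont.const_smul _ h1 c
    · simp only [map_smul]
      exact WeakCont.const_smul _ h2 c

theorem smulL_mem_sigmaWC {ρ : A ≃ₗᵢ[ℂ] (X →L[ℂ] ℂ)} {S : BanachAlgStr A}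
    {M : BanachBimodule S E} (hA : IsDualBanachAlgebra ρ S) {x : E}
    (hx : x ∈ sigmaWC ρ M) (a : A) : M.l a x ∈ sigmaWC ρ M := by
  obtain ⟨h1, h2⟩ := hx
  constructor
  · have he : (fun c => M.l c (M.l a x)) = fun c => M.l (S.mul c a) x :=
      funext fun c => (M.l_mul c a x).symm
    rw [he]
    exact @Continuous.comp A A E (wstar ρ) (wstar ρ) (weakTop E) _ _ h1 (hA.mul_right a)
  · have he : (fun c => M.r c (M.l a x)) = fun c => M.l a (M.r c x) :=
      funext fun c => (M.lr_comm a c x).symm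
    rw [he]
    exact WeakCont.clm_comp _ (M.l a) h2

theorem smulR_mem_sigmaWC {ρ : A ≃ₗᵢ[ℂ] (X →L[ℂ] ℂ)} {S : BanachAlgStr A}
    {M : BanachBimodule S E} (hA : IsDualBanachAlgebra ρ S) {x : E}
    (hx : x ∈ sigmaWC ρ M) (a : A) : M.r a x ∈ sigmaWC ρ M := by
  obtain ⟨h1, h2⟩ := hx
  constructor
  · have he : (fun c => M.l c (M.r a x)) = fun c => M.r a (M.l c x) :=
      funext fun c => M.lr_comm c a x
    rw [he]
    exact WeakCont.clm_comp _ (M.r a) h1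
  · have he : (fun c => M.r c (M.r a x)) = fun c => M.r (S.mul a c) x :=
      funext fun c => (M.r_mul a c x).symm
    rw [he]
    exact @Continuous.comp A A E (wstar ρ) (wstar ρ) (weakTop E) _ _ h2 (hA.mul_left a)

/-- `j_E : E* → σwc(E)*`, restriction of functionals (the adjoint of the inclusion
`σwc(E) ↪ E`). -/
def jmap (ρ : A ≃ₗᵢ[ℂ] (X →L[ℂ] ℂ)) {S : BanachAlgStr A} (M : BanachBimodule S E)
    (φ : E →L[ℂ] ℂ) : ↥(sigmaWC ρ M) →L[ℂ] ℂ :=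
  φ.comp (sigmaWC ρ M).subtypeL

/-- The left dual action of `A` on `σwc(E)*`: `(a · Λ)(x) = Λ(x · a)`. -/
def dualL {ρ : A ≃ₗᵢ[ℂ] (X →L[ℂ] ℂ)} {S : BanachAlgStr A} {M : BanachBimodule S E}
    (hA : IsDualBanachAlgebra ρ S) (a : A) (Λ : ↥(sigmaWC ρ M) →L[ℂ] ℂ) :
    ↥(sigmaWC ρ M) →L[ℂ] ℂ :=
  Λ.comp (ContinuousLinearMap.codRestrict ((M.r a).comp (sigmaWC ρ M).subtypeL)
    (sigmaWC ρ M) fun x => smulR_mem_sigmaWC hA x.2 a)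

/-- The right dual action of `A` on `σwc(E)*`: `(Λ · a)(x) = Λ(a · x)`. -/
def dualR {ρ : A ≃ₗᵢ[ℂ] (X →L[ℂ] ℂ)} {S : BanachAlgStr A} {M : BanachBimodule S E}
    (hA : IsDualBanachAlgebra ρ S) (a : A) (Λ : ↥(sigmaWC ρ M) →L[ℂ] ℂ) :
    ↥(sigmaWC ρ M) →L[ℂ] ℂ :=
  Λ.comp (ContinuousLinearMap.codRestrict ((M.l a).comp (sigmaWC ρ M).subtypeL)
    (sigmaWC ρ M) fun x => smulL_mem_sigmaWC hA x.2 a)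

/-- `D : A → E*` is a derivation for the dual bimodule actions of `A` on `E*`,
i.e. `D(ab) = a · D(b) + D(a) · b`, where `(a · φ)(x) = φ(x · a)` and
`(φ · a)(x) = φ(a · x)`. -/
def IsDerivationToDual (S : BanachAlgStr A) (M : BanachBimodule S E)
    (D : A →L[ℂ] (E →L[ℂ] ℂ)) : Prop :=
  ∀ a b, D (S.mul a b) = (D b).comp (M.r a) + (D a).comp (M.l b)

/-- `D : A → E` is a derivation for the bimodule actions of `A` on `E`:
`D(ab) = a · D(b) + D(a) · b`. -/
def IsDerivationInto (S : BanachAlgStr A) (M : BanachBimodule S E)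
    (D : A →L[ℂ] E) : Prop :=
  ∀ a b, D (S.mul a b) = M.l a (D b) + M.r b (D a)

/-- The dual Banach algebra `(A, ρ, S)` is weakly Connes amenable: for every derivation
`D : A → A*` such that `j_A ∘ D : A → σwc(A)*` is weak-*–weak-* continuous, the
derivation `j_A ∘ D` is inner, i.e. of the form `a ↦ a · Φ - Φ · a` for some
`Φ ∈ σwc(A)*`. -/
def WeaklyConnesAmenable (ρ : A ≃ₗᵢ[ℂ] (X →L[ℂ] ℂ)) (S : BanachAlgStr A)
    (hA : IsDualBanachAlgebra ρ S) : Prop :=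
  ∀ D : A →L[ℂ] (A →L[ℂ] ℂ), IsDerivationToDual S S.toBimodule D →
    Continuous[wstar ρ, wstarD ↥(sigmaWC ρ S.toBimodule)]
      (fun a => jmap ρ S.toBimodule (D a)) →
    ∃ Φ, ∀ a, jmap ρ S.toBimodule (D a) = dualL hA a Φ - dualR hA a Φ

end Core

section Vf

/-- The Banach algebra `V_f`: `V = X*` equipped with the product `a * b := f(a) • b`,
where `f` is the (`w*`-continuous, norm at most one) functional of evaluation at a point
`x₀ ∈ X` with `‖x₀‖ ≤ 1`. -/
def VfStr (X : Type u) [NormedAddCommGroup X] [NormedSpace ℂ X] (x₀ : X)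
    (h : ‖x₀‖ ≤ 1) : BanachAlgStr (X →L[ℂ] ℂ) where
  mul := (NormedSpace.inclusionInDoubleDual ℂ X x₀).smulRight
    (ContinuousLinearMap.id ℂ (X →L[ℂ] ℂ))
  mul_assoc := by
    intro a b c
    simp [ContinuousLinearMap.smulRight_apply, ContinuousLinearMap.smul_apply,
      NormedSpace.dual_def, smul_smul, mul_comm]
  norm_mul_le := by
    intro a b
    have he : ((NormedSpace.inclusionInDoubleDual ℂ X x₀).smulRight
        (ContinuousLinearMap.id ℂ (X →L[ℂ] ℂ))) a b = a x₀ • b := by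
      simp [NormedSpace.dual_def]
    rw [he]
    calc ‖a x₀ • b‖ ≤ ‖a x₀‖ * ‖b‖ := ContinuousLinearMap.opNorm_smul_le _ _
      _ ≤ (‖a‖ * ‖x₀‖) * ‖b‖ :=
          mul_le_mul_of_nonneg_right (a.le_opNorm x₀) (norm_nonneg b)
      _ ≤ ‖a‖ * ‖b‖ :=
          mul_le_mul_of_nonneg_right (mul_le_of_le_one_right (norm_nonneg a) h)
            (norm_nonneg b)

theorem VfStr_mul_apply {X : Type u} [NormedAddCommGroup X] [NormedSpace ℂ X] {x₀ : X}
    {h : ‖x₀‖ ≤ 1} (a b : X →L[ℂ] ℂ) : (VfStr X x₀ h).mul a b = a x₀ • b := by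
  simp [VfStr, NormedSpace.dual_def]

end Vf

/-- A linear functional on `X*` which is continuous for the weak-* topology `σ(X*, X)`
is evaluation at some point of `X`. -/
theorem wstar_cont_functional_eq_eval {X : Type u} [NormedAddCommGroup X] [NormedSpace ℂ X]
    (Φ : (X →L[ℂ] ℂ) →L[ℂ] ℂ)
    (hΦ : Continuous[wstar (LinearIsometryEquiv.refl ℂ (X →L[ℂ] ℂ)), inferInstance]
      fun a => Φ a) :
    ∃ x : X, Φ = NormedSpace.inclusionInDoubleDual ℂ X x := by
  classical
  set V := X →L[ℂ] ℂ
  -- the w*-topology is the topology induced by the coercion `V → (X → ℂ)`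
  have hball : (fun a => Φ a) ⁻¹' Metric.ball (0 : ℂ) 1 ∈ @nhds V
      (wstar (LinearIsometryEquiv.refl ℂ V)) 0 := by
    have h0 : Φ (0 : V) = 0 := map_zero Φ
    have := @Continuous.tendsto V ℂ (wstar (LinearIsometryEquiv.refl ℂ V)) _ _ hΦ 0
    rw [h0] at this
    exact this (Metric.ball_mem_nhds 0 one_pos)
  rw [show wstar (LinearIsometryEquiv.refl ℂ V) =
      TopologicalSpace.induced (fun a : V => fun x : X => a x) Pi.topologicalSpace from rfl,
    nhds_induced] at hball
  obtain ⟨U, hU, hUsub⟩ := hball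
  have hU' : U ∈ 𝓝 (0 : X → ℂ) := by
    exact hU
  rw [nhds_pi, Filter.mem_pi] at hU'
  obtain ⟨I, hIfin, W, hW, hWU⟩ := hU'
  -- if `a` vanishes on `I` then `Φ a = 0`
  have hker : ∀ a : V, (∀ x ∈ I, a x = 0) → Φ a = 0 := by
    intro a ha
    have hb : ∀ n : ℕ, ‖Φ a‖ * n < 1 := by
      intro n
      have hmem : (fun x : X => ((n : ℂ) • a) x) ∈ U := by
        apply hWU
        intro x hx
        show ((n : ℂ) • a) x ∈ W x
        have hz : ((n : ℂ) • a) x = 0 := by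
          rw [ContinuousLinearMap.smul_apply, ha x hx, smul_zero]
        rw [hz]
        exact mem_of_mem_nhds (hW x)
      have : ‖Φ ((n : ℂ) • a)‖ < 1 := by
        have := hUsub hmem
        simpa [Real.norm_eq_abs] using this
      calc ‖Φ a‖ * n = ‖Φ ((n : ℂ) • a)‖ := by
            simp [map_smul, norm_smul, mul_comm]
        _ < 1 := this
    by_contra h0
    have hpos : 0 < ‖Φ a‖ := norm_pos_iff.2 h0
    obtain ⟨n, hn⟩ := exists_nat_gt (1 / ‖Φ a‖)
    have : 1 < ‖Φ a‖ * n := by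
      rw [div_lt_iff₀ hpos] at hn
      linarith [hn]
    exact absurd (hb n) (not_lt.2 this.le)
  -- hence `Φ` lies in the span of the evaluations at points of `I`
  haveI : Finite ↥I := hIfin
  have hle : ⨅ x : ↥I, LinearMap.ker
      ((NormedSpace.inclusionInDoubleDual ℂ X (x : X)).toLinearMap) ≤
      LinearMap.ker Φ.toLinearMap := by
    intro a ha
    rw [Submodule.mem_iInf] at ha
    refine LinearMap.mem_ker.2 ?_
    apply hker
    intro x hx
    have := ha ⟨x, hx⟩
    simpa [NormedSpace.dual_def] using this
  have hspan := mem_span_of_iInf_ker_le_ker hle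
  haveI : Fintype ↥I := hIfin.fintype
  obtain ⟨c, hc⟩ := (Submodule.mem_span_range_iff_exists_fun ℂ).1 hspan
  refine ⟨∑ i : ↥I, c i • (i : X), ?_⟩
  ext a
  have := LinearMap.congr_fun hc a
  simp only [LinearMap.coe_sum, Finset.sum_apply, LinearMap.smul_apply,
    ContinuousLinearMap.coe_coe, NormedSpace.dual_def, smul_eq_mul] at this
  rw [← this]
  simp [NormedSpace.dual_def, map_sum, map_smul, smul_eq_mul]

/-- **Proposition 4.6 (i).** Let `X` be a non-reflexive complex Banach space, `V = X*`
with `dim V ≥ 2`, and let `f ∈ V*` be the (w*-continuous, nonzero, `‖f‖ ≤ 1`) functional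
of evaluation at a nonzero `x₀ ∈ X` with `‖x₀‖ ≤ 1`.  For the dual Banach algebra `V_f`
(`V` with product `a b := f(a) • b` and predual `X`): `σwc(V_f) = ker f`. -/
theorem sigmaWC_Vf_eq_ker {X : Type u} [NormedAddCommGroup X] [NormedSpace ℂ X]
    [CompleteSpace X]
    (hnr : ¬ Function.Surjective (NormedSpace.inclusionInDoubleDual ℂ X))
    (x₀ : X) (hx₀ : x₀ ≠ 0) (hn : ‖x₀‖ ≤ 1)
    (hdim : 2 ≤ Module.rank ℂ (X →L[ℂ] ℂ)) :
    sigmaWC (LinearIsometryEquiv.refl ℂ (X →L[ℂ] ℂ)) (VfStr X x₀ hn).toBimodule =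
      LinearMap.ker ((NormedSpace.inclusionInDoubleDual ℂ X x₀ : (X →L[ℂ] ℂ) →ₗ[ℂ] ℂ)) := by
  set V := X →L[ℂ] ℂ
  set ρ := LinearIsometryEquiv.refl ℂ V
  set S := VfStr X x₀ hn
  ext v
  constructor
  · rintro ⟨h1, h2⟩
    rw [LinearMap.mem_ker]
    by_contra hc
    have hc' : v x₀ ≠ 0 := by
      intro h
      exact hc (by simp [NormedSpace.dual_def, h])
    -- the map `a ↦ (v x₀) • a` is `w*`-to-weak continuous
    have h2' : Continuous[wstar ρ, weakTop V] fun a : V => v x₀ • a := by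
      have he : (fun a : V => S.toBimodule.r a v) = fun a : V => v x₀ • a := by
        funext a
        show S.mul.flip a v = v x₀ • a
        rw [ContinuousLinearMap.flip_apply, VfStr_mul_apply]
      rwa [he] at h2
    -- hence every `Φ ∈ V*` is `w*`-continuous, so the canonical embedding is onto
    apply hnr
    intro Φ
    have hΦ : Continuous[wstar ρ, inferInstance] fun a : V => Φ a := by
      have h3 := weakTop_cont_iff.1 h2' Φ
      have h4 : Continuous[wstar ρ, inferInstance]
          fun a : V => (v x₀)⁻¹ * Φ (v x₀ • a) := by
        letI := wstar ρ
        exact h3.const_smul ((v x₀)⁻¹)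
      have he : (fun a : V => (v x₀)⁻¹ * Φ (v x₀ • a)) = fun a : V => Φ a := by
        funext a
        rw [map_smul, smul_eq_mul, ← mul_assoc, inv_mul_cancel₀ hc', one_mul]
      rwa [he] at h4
    obtain ⟨x, hx⟩ := wstar_cont_functional_eq_eval Φ hΦ
    exact ⟨x, hx.symm⟩
  · intro hv
    have hv' : v x₀ = 0 := by
      simpa [NormedSpace.dual_def] using LinearMap.mem_ker.1 hv
    constructor
    · -- `a ↦ a x₀ • v` is `w*`-to-weak continuous
      have he : (fun a : V => S.toBimodule.l a v) = fun a : V => a x₀ • v := by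
        funext a
        show S.mul a v = a x₀ • v
        rw [VfStr_mul_apply]
      rw [he]
      refine weakTop_cont_iff.2 fun φ => ?_
      have heval : Continuous[wstar ρ, inferInstance] fun a : V => a x₀ := by
        have := topOfPairing_eval_cont (fun (a : V) (x : X) => ρ a x) x₀
        exact this
      letI := wstar ρ
      have : Continuous fun a : V => a x₀ * φ v := heval.mul continuous_const
      simpa [map_smul, smul_eq_mul] using this
    · -- `a ↦ v x₀ • a = 0` is trivially continuous
      have he : (fun a : V => S.toBimodule.r a v) = fun _ : V => (0 : V) := by
        funext a
        show S.mul.flip a v = 0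
        rw [ContinuousLinearMap.flip_apply, VfStr_mul_apply, hv']
        exact zero_smul ℂ a
      rw [he]
      exact WeakCont.zero _
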